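/- Let n ≥ 1, let p be an integer with 1 ≤ p ≤ n, and let A be an n×n real matrix. Then there exists exactly one real number λ such that there exists a vector x ∈ ℝⁿ with (A ⊗_p x)_i = λ + x_i for all i ∈ {1,…,n}. -/

import Mathlib

/-- The maxmin-`p` value of `s : Fin n → ℝ`: the `p`-th smallest element (1-indexed) of the
multiset `{s 0, …, s (n-1)}`, counted with multiplicity. -/
noncomputable def maxmin {n : ℕ} (p : ℕ) (s : Fin n → ℝ) : ℝ :=
  (Multiset.sort (Multiset.map s (Finset.univ : Finset (Fin n)).val) (· ≤ ·)).getD (p - 1) 0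

/-- The maxmin-`p` matrix-vector product: `(A ⊗_p x)_i = ⊕_p (j ↦ A i j + x j)`. -/
noncomputable def mmProd {n : ℕ} (p : ℕ) (A : Fin n → Fin n → ℝ) (x : Fin n → ℝ) :
    Fin n → ℝ :=
  fun i => maxmin p (fun j => A i j + x j)

private lemma sorted_getElem_le {l : List ℝ} (hl : l.Pairwise (· ≤ ·)) {i j : ℕ}
    (hij : i ≤ j) (hj : j < l.length) : l[i]'(lt_of_le_of_lt hij hj) ≤ l[j] := by
  have := hl.rel_get_of_le (a := ⟨i, lt_of_le_of_lt hij hj⟩) (b := ⟨j, hj⟩) (by exact hij)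
  simpa using this

private lemma countP_le_idx {l : List ℝ} (hl : l.Pairwise (· ≤ ·)) {k : ℕ} (hk : k < l.length) :
    k + 1 ≤ l.countP (fun a => decide (a ≤ l[k])) := by
  set v := l[k]
  have hsplit := List.take_append_drop (k+1) l
  have h1 : (l.take (k+1)).countP (fun a => decide (a ≤ v)) = (l.take (k+1)).length := by
    rw [List.countP_eq_length]
    intro a ha
    rw [List.mem_iff_getElem] at ha
    obtain ⟨i, hi, rfl⟩ := ha
    have hi' : i < k + 1 := by
      have := hi; rw [List.length_take] at this; omega
    rw [List.getElem_take]
    simpa using sorted_getElem_le hl (by omega : i ≤ k) hk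
  have h2 : (l.take (k+1)).length = k+1 := by rw [List.length_take]; omega
  calc k + 1 = (l.take (k+1)).countP (fun a => decide (a ≤ v)) := by rw [h1, h2]
    _ ≤ l.countP (fun a => decide (a ≤ v)) := by
        conv_rhs => rw [← hsplit]
        rw [List.countP_append]; omega

private lemma countP_lt_idx {l : List ℝ} (hl : l.Pairwise (· ≤ ·)) {k : ℕ} (hk : k < l.length) :
    l.countP (fun a => decide (a < l[k])) ≤ k := by
  set v := l[k] with hv
  have hsplit := List.take_append_drop k l
  have h2 : (l.drop k).countP (fun a => decide (a < v)) = 0 := by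
    rw [List.countP_eq_zero]
    intro a ha
    rw [List.mem_iff_getElem] at ha
    obtain ⟨i, hi, rfl⟩ := ha
    have hki : k + i < l.length := by have := hi; rw [List.length_drop] at this; omega
    rw [List.getElem_drop]
    simp only [decide_eq_true_eq, not_lt]
    exact sorted_getElem_le hl (by omega : k ≤ k + i) hki
  calc l.countP (fun a => decide (a < v))
      = (l.take k).countP (fun a => decide (a < v)) + (l.drop k).countP (fun a => decide (a < v)) := by
        conv_lhs => rw [← hsplit]
        rw [List.countP_append]
    _ ≤ (l.take k).length + 0 := by rw [h2]; exact Nat.add_le_add List.countP_le_length le_rfl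
    _ ≤ k := by rw [List.length_take]; omega

section
variable {n p : ℕ}

private lemma maxmin_count (s : Fin n → ℝ) (P : ℝ → Prop) [DecidablePred P] :
    (Finset.univ.filter (fun j => P (s j))).card
      = (Multiset.sort (Multiset.map s (Finset.univ : Finset (Fin n)).val) (· ≤ ·)).countP
          (fun a => decide (P a)) := by
  have h := Multiset.sort_eq (Multiset.map s (Finset.univ : Finset (Fin n)).val) (· ≤ ·)
  have h2 : (Multiset.sort (Multiset.map s (Finset.univ : Finset (Fin n)).val) (· ≤ ·)).countP
      (fun a => decide (P a)) = Multiset.countP P (Multiset.map s (Finset.univ : Finset (Fin n)).val) := by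
    rw [← Multiset.coe_countP, h]
  rw [h2, Multiset.countP_map]
  rfl

private lemma maxmin_M1 (hp1 : 1 ≤ p) (hpn : p ≤ n) (s : Fin n → ℝ) :
    ∃ T : Finset (Fin n), T.card = p ∧ ∀ j ∈ T, s j ≤ maxmin p s := by
  classical
  set l := Multiset.sort (Multiset.map s (Finset.univ : Finset (Fin n)).val) (· ≤ ·) with hldef
  have hsort : l.Pairwise (· ≤ ·) := Multiset.pairwise_sort _ _
  have hlen : l.length = n := by simp [hldef]
  have hk : p - 1 < l.length := by omega
  have hval : maxmin p s = l[p-1] := by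
    rw [maxmin, ← hldef]; exact List.getD_eq_getElem l 0 hk
  have h1 := maxmin_count s (fun a => a ≤ l[p-1]'hk)
  have h2 := countP_le_idx hsort hk
  rw [← hldef] at h1
  have hcard : p ≤ (Finset.univ.filter (fun j => s j ≤ l[p-1])).card := by
    rw [h1]; omega
  obtain ⟨T, hTsub, hTcard⟩ := Finset.exists_subset_card_eq hcard
  refine ⟨T, hTcard, fun j hj => ?_⟩
  have := hTsub hj
  rw [Finset.mem_filter] at this
  rw [hval]; exact this.2

private lemma maxmin_M2 (hp1 : 1 ≤ p) (hpn : p ≤ n) (s : Fin n → ℝ)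
    (T : Finset (Fin n)) (hT : T.card = p) : ∃ j ∈ T, maxmin p s ≤ s j := by
  classical
  set l := Multiset.sort (Multiset.map s (Finset.univ : Finset (Fin n)).val) (· ≤ ·) with hldef
  have hsort : l.Pairwise (· ≤ ·) := Multiset.pairwise_sort _ _
  have hlen : l.length = n := by simp [hldef]
  have hk : p - 1 < l.length := by omega
  have hval : maxmin p s = l[p-1] := by
    rw [maxmin, ← hldef]; exact List.getD_eq_getElem l 0 hk
  have hcount := maxmin_count s (fun a => a < l[p-1]'hk)
  rw [← hldef] at hcount
  by_contra hcon
  push_neg at hcon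
  have hsub : T ⊆ Finset.univ.filter (fun j => s j < l[p-1]) := by
    intro j hj
    rw [Finset.mem_filter]
    exact ⟨Finset.mem_univ j, by rw [← hval]; exact hcon j hj⟩
  have := Finset.card_le_card hsub
  rw [hT, hcount] at this
  have := countP_lt_idx hsort hk
  omega

/-- The key comparison lemma. -/
private lemma maxmin_le_add (hp1 : 1 ≤ p) (hpn : p ≤ n) {s t : Fin n → ℝ} {c : ℝ}
    (h : ∀ j, s j ≤ t j + c) : maxmin p s ≤ maxmin p t + c := by
  obtain ⟨T, hTcard, hTle⟩ := maxmin_M1 hp1 hpn t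
  obtain ⟨j, hjT, hjle⟩ := maxmin_M2 hp1 hpn s T hTcard
  calc maxmin p s ≤ s j := hjle
    _ ≤ t j + c := h j
    _ ≤ maxmin p t + c := by have := hTle j hjT; linarith

end


-- scratch: N seminorm lemmas
section
variable {n : ℕ} (hn : 1 ≤ n)

private noncomputable def Nsem {n : ℕ} (hn : 1 ≤ n) (z : Fin n → ℝ) : ℝ :=
  Finset.univ.sup' (⟨⟨0, hn⟩, Finset.mem_univ _⟩) z
    - Finset.univ.inf' (⟨⟨0, hn⟩, Finset.mem_univ _⟩) z

private lemma Nsem_nonneg (z : Fin n → ℝ) : 0 ≤ Nsem hn z := by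
  have h1 := Finset.inf'_le z (Finset.mem_univ ⟨0, hn⟩)
  have h2 := Finset.le_sup' z (Finset.mem_univ ⟨0, hn⟩)
  unfold Nsem; linarith

private lemma le_Nsem_of_zero {z : Fin n → ℝ} (hz : z ⟨0, hn⟩ = 0) : ‖z‖ ≤ Nsem hn z := by
  rw [pi_norm_le_iff_of_nonneg (Nsem_nonneg hn z)]
  intro i
  rw [Real.norm_eq_abs, abs_le]
  have h1 := Finset.inf'_le z (Finset.mem_univ ⟨0, hn⟩)
  have h2 := Finset.le_sup' z (Finset.mem_univ ⟨0, hn⟩)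
  have h3 := Finset.inf'_le z (Finset.mem_univ i)
  have h4 := Finset.le_sup' z (Finset.mem_univ i)
  unfold Nsem
  constructor <;> [linarith [hz]; linarith [hz]]

private lemma Nsem_smul (a : ℝ) (ha : 0 ≤ a) (z : Fin n → ℝ) :
    Nsem hn (a • z) = a * Nsem hn z := by
  have hne : (Finset.univ : Finset (Fin n)).Nonempty := ⟨⟨0, hn⟩, Finset.mem_univ _⟩
  have hsup : Finset.univ.sup' hne (a • z) = a * Finset.univ.sup' hne z := by
    apply le_antisymm
    · apply Finset.sup'_le
      intro i _
      have := Finset.le_sup' z (Finset.mem_univ i)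
      calc (a • z) i = a * z i := rfl
        _ ≤ a * Finset.univ.sup' hne z := by nlinarith
    · obtain ⟨i, _, hi⟩ := Finset.exists_mem_eq_sup' hne z
      rw [hi]
      exact Finset.le_sup' (a • z) (Finset.mem_univ i)
  have hinf : Finset.univ.inf' hne (a • z) = a * Finset.univ.inf' hne z := by
    apply le_antisymm
    · obtain ⟨i, _, hi⟩ := Finset.exists_mem_eq_inf' hne z
      rw [hi]
      exact Finset.inf'_le (a • z) (Finset.mem_univ i)
    · apply Finset.le_inf'
      intro i _
      have := Finset.inf'_le z (Finset.mem_univ i)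
      calc a * Finset.univ.inf' hne z ≤ a * z i := by nlinarith
        _ = (a • z) i := rfl
  unfold Nsem
  rw [hsup, hinf]; ring

private lemma Nsem_lipschitz : LipschitzWith 2 (Nsem hn) := by
  have hne : (Finset.univ : Finset (Fin n)).Nonempty := ⟨⟨0, hn⟩, Finset.mem_univ _⟩
  apply LipschitzWith.of_dist_le_mul
  intro z w
  rw [Real.dist_eq, abs_le]
  have key : ∀ u v : Fin n → ℝ, Nsem hn u ≤ Nsem hn v + 2 * dist u v := by
    intro u v
    have hsup : Finset.univ.sup' hne u ≤ Finset.univ.sup' hne v + dist u v := by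
      apply Finset.sup'_le
      intro i _
      have h1 := dist_le_pi_dist u v i
      rw [Real.dist_eq] at h1
      have h2 := Finset.le_sup' v (Finset.mem_univ i)
      have := abs_le.mp h1
      linarith [this.2]
    have hinf : Finset.univ.inf' hne v ≤ Finset.univ.inf' hne u + dist u v := by
      obtain ⟨i, _, hi⟩ := Finset.exists_mem_eq_inf' hne u
      have h1 := dist_le_pi_dist u v i
      rw [Real.dist_eq] at h1
      have h2 := Finset.inf'_le v (Finset.mem_univ i)
      have := abs_le.mp h1
      rw [hi]
      linarith [this.1]
    unfold Nsem at *
    linarith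
  have k1 := key z w
  have k2 := key w z
  rw [dist_comm w z] at k2
  push_cast
  constructor <;> linarith

end
section Main

/-- There is exactly one real number `λ` admitting a finite maxmin-`p` eigenvector. -/
theorem maxmin_eigenvalue_exists_unique (n p : ℕ) (hn : 1 ≤ n) (hp1 : 1 ≤ p) (hpn : p ≤ n)
    (A : Fin n → Fin n → ℝ) :
    ∃! lam : ℝ, ∃ x : Fin n → ℝ, ∀ i, mmProd p A x i = lam + x i := by
  classical
  set i0 : Fin n := ⟨0, hn⟩ with hi0
  have hne : (Finset.univ : Finset (Fin n)).Nonempty := ⟨i0, Finset.mem_univ _⟩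
  -- bound on A
  set c : ℝ := Finset.univ.sup' hne (fun i => Finset.univ.sup' hne (fun j => |A i j|)) with hc
  have hcA : ∀ i j, |A i j| ≤ c := by
    intro i j
    have h1 : |A i j| ≤ Finset.univ.sup' hne (fun j => |A i j|) :=
      Finset.le_sup' (fun j => |A i j|) (Finset.mem_univ j)
    have h2 : Finset.univ.sup' hne (fun j => |A i j|) ≤ c :=
      Finset.le_sup' (fun i => Finset.univ.sup' hne (fun j => |A i j|)) (Finset.mem_univ i)
    linarith
  have hc0 : 0 ≤ c := le_trans (abs_nonneg _) (hcA i0 i0)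
  set F : (Fin n → ℝ) → (Fin n → ℝ) := mmProd p A with hF
  -- key comparison
  have hFle : ∀ (x y : Fin n → ℝ) (d : ℝ), (∀ j, x j ≤ y j + d) → ∀ i, F x i ≤ F y i + d := by
    intro x y d h i
    show maxmin p (fun j => A i j + x j) ≤ maxmin p (fun j => A i j + y j) + d
    exact maxmin_le_add hp1 hpn (fun j => by have := h j; linarith)
  -- uniqueness
  have uniq : ∀ (lam mu : ℝ) (x y : Fin n → ℝ), (∀ i, F x i = lam + x i) →
      (∀ i, F y i = mu + y i) → lam ≤ mu := by
    intro lam mu x y hx hy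
    obtain ⟨i, _, hi⟩ := Finset.exists_mem_eq_sup' hne (fun i => x i - y i)
    have hd : ∀ j, x j ≤ y j + (x i - y i) := by
      intro j
      have h1 : x j - y j ≤ Finset.univ.sup' hne (fun i => x i - y i) :=
        Finset.le_sup' (fun i => x i - y i) (Finset.mem_univ j)
      rw [hi] at h1
      linarith
    have := hFle x y (x i - y i) hd i
    rw [hx i, hy i] at this
    linarith
  -- row comparison
  have hFrow : ∀ (x : Fin n → ℝ) (i i' : Fin n), F x i ≤ F x i' + 2 * c := by
    intro x i i'
    show maxmin p (fun j => A i j + x j) ≤ maxmin p (fun j => A i' j + x j) + 2 * c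
    refine maxmin_le_add hp1 hpn (fun j => ?_)
    have h1 := abs_le.mp (hcA i j)
    have h2 := abs_le.mp (hcA i' j)
    have := h1.2
    have := h2.1
    linarith
  -- Lipschitz for F components
  have hFdist : ∀ (x y : Fin n → ℝ) (i : Fin n), |F x i - F y i| ≤ dist x y := by
    intro x y i
    have habs : ∀ j, |x j - y j| ≤ dist x y := by
      intro j
      have := dist_le_pi_dist x y j
      rwa [Real.dist_eq] at this
    have h1 := hFle x y (dist x y) (fun j => by have := abs_le.mp (habs j); linarith [this.2]) i
    have h2 := hFle y x (dist x y)
      (fun j => by have := abs_le.mp (habs j); linarith [this.1]) i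
    rw [abs_le]; constructor <;> linarith
  have hFcont : ∀ i : Fin n, Continuous (fun x => F x i) := by
    intro i
    refine (LipschitzWith.of_dist_le_mul (K := 1) (fun x y => ?_)).continuous
    rw [Real.dist_eq, NNReal.coe_one, one_mul]
    exact hFdist x y i
  -- G
  set G : (Fin n → ℝ) → (Fin n → ℝ) := fun x i => F x i - F x i0 with hG
  have hGapp : ∀ x i, G x i = F x i - F x i0 := fun x i => rfl
  have hGcont : Continuous G := continuous_pi (fun i => ((hFcont i).sub (hFcont i0)))
  have hGi0 : ∀ x, G x i0 = 0 := fun x => sub_self _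
  have hGbound : ∀ x, ‖G x‖ ≤ 2 * c := by
    intro x
    rw [pi_norm_le_iff_of_nonneg (by linarith)]
    intro i
    rw [Real.norm_eq_abs, hGapp, abs_le]
    constructor
    · have := hFrow x i0 i; linarith
    · have := hFrow x i i0; linarith
  -- Hilbert-seminorm nonexpansiveness
  have hNFG : ∀ x y : Fin n → ℝ, Nsem hn (G x - G y) ≤ Nsem hn (x - y) := by
    intro x y
    have hbnd : ∀ i, Finset.univ.inf' hne (x - y) ≤ F x i - F y i ∧
        F x i - F y i ≤ Finset.univ.sup' hne (x - y) := by
      intro i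
      constructor
      · have hd : ∀ j, y j ≤ x j + (- Finset.univ.inf' hne (x - y)) := by
          intro j
          have h1 : Finset.univ.inf' hne (x - y) ≤ (x - y) j :=
            Finset.inf'_le (x - y) (Finset.mem_univ j)
          have h2 : (x - y) j = x j - y j := rfl
          linarith
        have := hFle y x _ hd i
        linarith
      · have hd : ∀ j, x j ≤ y j + Finset.univ.sup' hne (x - y) := by
          intro j
          have h1 : (x - y) j ≤ Finset.univ.sup' hne (x - y) :=
            Finset.le_sup' (x - y) (Finset.mem_univ j)
          have h2 : (x - y) j = x j - y j := rfl
          linarith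
        have := hFle x y _ hd i
        linarith
    have hGG : ∀ i, (G x - G y) i = (F x i - F y i) - (F x i0 - F y i0) := by
      intro i
      have : (G x - G y) i = G x i - G y i := rfl
      rw [this, hGapp, hGapp]; ring
    have hsup : Finset.univ.sup' hne (G x - G y) ≤
        Finset.univ.sup' hne (x - y) - (F x i0 - F y i0) := by
      apply Finset.sup'_le
      intro i _
      rw [hGG i]
      linarith [(hbnd i).2]
    have hinf : Finset.univ.inf' hne (x - y) - (F x i0 - F y i0) ≤
        Finset.univ.inf' hne (G x - G y) := by
      apply Finset.le_inf'
      intro i _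
      rw [hGG i]
      linarith [(hbnd i).1]
    unfold Nsem
    linarith
  -- compact set K
  set K : Set (Fin n → ℝ) := {x | x i0 = 0} ∩ Metric.closedBall 0 (2 * c) with hK
  have hKcl : IsClosed {x : Fin n → ℝ | x i0 = 0} :=
    isClosed_eq (continuous_apply i0) continuous_const
  have hKcompact : IsCompact K :=
    (isCompact_closedBall (0 : Fin n → ℝ) (2*c)).inter_left hKcl
  have hKne : K.Nonempty := by
    refine ⟨0, ⟨rfl, ?_⟩⟩
    rw [Metric.mem_closedBall, dist_self]
    linarith
  -- step: for each a ∈ [0,1), a fixed point of a • G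
  have hstep : ∀ a : ℝ, 0 ≤ a → a < 1 → ∃ x ∈ K, x = a • G x := by
    intro a ha0 ha1
    set Φ : (Fin n → ℝ) → (Fin n → ℝ) := fun x => a • G x with hΦ
    have hΦapp : ∀ x, Φ x = a • G x := fun x => rfl
    have hΦK : ∀ x ∈ K, Φ x ∈ K := by
      intro x hx
      constructor
      · show (a • G x) i0 = 0
        have : (a • G x) i0 = a * G x i0 := rfl
        rw [this, hGi0 x, mul_zero]
      · rw [Metric.mem_closedBall, dist_zero_right, hΦapp, norm_smul, Real.norm_eq_abs,
          abs_of_nonneg ha0]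
        have hg := hGbound x
        have hGn : 0 ≤ ‖G x‖ := norm_nonneg _
        nlinarith
    have hΦcont : Continuous Φ := Continuous.smul (f := fun _ : Fin n → ℝ => a) (g := G) continuous_const hGcont
    have hhcont : Continuous (fun x => Nsem hn (Φ x - x)) :=
      (Nsem_lipschitz hn).continuous.comp (hΦcont.sub continuous_id)
    obtain ⟨x, hxK, hxmin⟩ := hKcompact.exists_isMinOn hKne hhcont.continuousOn
    have hmin2 : Nsem hn (Φ x - x) ≤ Nsem hn (Φ (Φ x) - Φ x) := hxmin (hΦK x hxK)
    have hkey : Nsem hn (Φ (Φ x) - Φ x) ≤ a * Nsem hn (Φ x - x) := by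
      have e : Φ (Φ x) - Φ x = a • (G (Φ x) - G x) := by
        show a • G (Φ x) - a • G x = a • (G (Φ x) - G x)
        rw [smul_sub]
      rw [e, Nsem_smul hn a ha0]
      have h1 := hNFG (Φ x) x
      exact mul_le_mul_of_nonneg_left h1 ha0
    have hzero : Nsem hn (Φ x - x) = 0 := by
      have h0 := Nsem_nonneg hn (Φ x - x)
      nlinarith
    refine ⟨x, hxK, ?_⟩
    have hz0 : (Φ x - x) i0 = 0 := by
      have h1 : (Φ x) i0 = 0 := by
        have : (a • G x) i0 = a * G x i0 := rfl
        show (a • G x) i0 = 0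
        rw [this, hGi0 x, mul_zero]
      have h2 : x i0 = 0 := hxK.1
      show Φ x i0 - x i0 = 0
      rw [h1, h2, sub_zero]
    have hle := le_Nsem_of_zero hn hz0
    rw [hzero] at hle
    have hnorm0 : Φ x - x = 0 := norm_eq_zero.mp (le_antisymm hle (norm_nonneg _))
    exact (sub_eq_zero.mp hnorm0).symm
  -- sequence of approximate fixed points
  have hstep' : ∀ k : ℕ, ∃ x, x ∈ K ∧ x = (1 - 1/(k+1 : ℝ)) • G x := by
    intro k
    have h1 : (0:ℝ) < 1/(k+1 : ℝ) := by positivity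
    have h2 : 1/(k+1 : ℝ) ≤ 1 := by
      rw [div_le_one (by positivity)]
      linarith [Nat.cast_nonneg (α := ℝ) k]
    obtain ⟨x, hx1, hx2⟩ := hstep (1 - 1/(k+1:ℝ)) (by linarith) (by linarith)
    exact ⟨x, hx1, hx2⟩
  choose xs hxsK hxs using hstep'
  obtain ⟨x, hxK, φ, hφ, hlim⟩ := hKcompact.tendsto_subseq hxsK
  -- show x = G x
  have hscal : Filter.Tendsto (fun j => (1 - 1/((φ j : ℝ)+1))) Filter.atTop (nhds 1) := by
    have h1 : Filter.Tendsto (fun j : ℕ => 1/((j:ℝ)+1)) Filter.atTop (nhds 0) :=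
      tendsto_one_div_add_atTop_nhds_zero_nat
    have h2 := h1.comp hφ.tendsto_atTop
    have h3 := Filter.Tendsto.sub (tendsto_const_nhds (x := (1:ℝ)) (f := Filter.atTop)) h2
    simpa using h3
  have hGx : Filter.Tendsto (fun j => G (xs (φ j))) Filter.atTop (nhds (G x)) :=
    (hGcont.tendsto x).comp hlim
  have hcomb : Filter.Tendsto (fun j => (1 - 1/((φ j : ℝ)+1)) • G (xs (φ j)))
      Filter.atTop (nhds ((1:ℝ) • G x)) := hscal.smul hGx
  have heq : (fun j => (1 - 1/((φ j : ℝ)+1)) • G (xs (φ j))) = fun j => xs (φ j) := by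
    funext j
    exact (hxs (φ j)).symm
  rw [heq, one_smul] at hcomb
  have hxGx : x = G x := tendsto_nhds_unique hlim hcomb
  -- conclusion
  have hx' : ∀ i, F x i = F x i0 + x i := by
    intro i
    have h1 : x i = G x i := by rw [← hxGx]
    rw [hGapp] at h1
    linarith
  refine ⟨F x i0, ⟨x, fun i => ?_⟩, ?_⟩
  · show F x i = F x i0 + x i
    exact hx' i
  · rintro mu ⟨y, hy⟩
    exact le_antisymm (uniq mu (F x i0) y x hy hx') (uniq (F x i0) mu x y hx' hy)

end Main
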